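/- Let f(x) be the Hankel quartic form generated by the symmetric vector v with v_0 = v_{12}, v_1 = v_{11} = t, v_2 = v_{10} = 1, v_3 = v_9 = t, v_4 = v_8 = 1, v_5 = v_7 = t, v_6 = 1, where t ∈ [-1,1] and v_0 = 1. Then f(x) = ((1+t)/2)(x_1 + x_2 + x_3 + x_4)^4 + ((1-t)/2)(x_1 - x_2 + x_3 - x_4)^4 for all x ∈ ℝ^4, and consequently f is a sum of squares and f(1, 0, -1, 0) = 0. -/

import Mathlib

set_option maxHeartbeats 1000000

noncomputable def hankelForm (v : Fin 13 → ℝ) (x : Fin 4 → ℝ) : ℝ :=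
  ∑ i1 : Fin 4, ∑ i2 : Fin 4, ∑ i3 : Fin 4, ∑ i4 : Fin 4,
    v ⟨i1.1 + i2.1 + i3.1 + i4.1, by omega⟩ * x i1 * x i2 * x i3 * x i4
def IsQuadForm (q : (Fin 4 → ℝ) → ℝ) : Prop :=
  ∃ A : Matrix (Fin 4) (Fin 4) ℝ, ∀ x, q x = ∑ i, ∑ j, A i j * x i * x j

def IsSOSQuad (f : (Fin 4 → ℝ) → ℝ) : Prop :=
  ∃ (m : ℕ) (q : Fin m → (Fin 4 → ℝ) → ℝ),
    (∀ k, IsQuadForm (q k)) ∧ ∀ x, f x = ∑ k, (q k x) ^ 2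

theorem stmt15 (t : ℝ) (ht : t ∈ Set.Icc (-1 : ℝ) 1) (v : Fin 13 → ℝ)
    (hv0 : v 0 = 1) (hv2 : v 2 = 1) (hv4 : v 4 = 1) (hv6 : v 6 = 1)
    (hv8 : v 8 = 1) (hv10 : v 10 = 1) (hv12 : v 12 = 1)
    (hv1 : v 1 = t) (hv3 : v 3 = t) (hv5 : v 5 = t) (hv7 : v 7 = t)
    (hv9 : v 9 = t) (hv11 : v 11 = t) :
    (∀ x : Fin 4 → ℝ, hankelForm v x =
      ((1 + t) / 2) * (x 0 + x 1 + x 2 + x 3) ^ 4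
        + ((1 - t) / 2) * (x 0 - x 1 + x 2 - x 3) ^ 4) ∧
    IsSOSQuad (hankelForm v) ∧
    hankelForm v ![1, 0, -1, 0] = 0 := by
  obtain ⟨ht1, ht2⟩ := ht
  have ha : (0:ℝ) ≤ (1 + t) / 2 := by linarith
  have hb : (0:ℝ) ≤ (1 - t) / 2 := by linarith
  have key : ∀ x : Fin 4 → ℝ, hankelForm v x =
      ((1 + t) / 2) * (x 0 + x 1 + x 2 + x 3) ^ 4
        + ((1 - t) / 2) * (x 0 - x 1 + x 2 - x 3) ^ 4 := by
    intro x
    simp only [hankelForm, Fin.sum_univ_four, show ((0:Fin 4).1)=0 from rfl,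
      show ((1:Fin 4).1)=1 from rfl, show ((2:Fin 4).1)=2 from rfl,
      show ((3:Fin 4).1)=3 from rfl]
    norm_num [hv0, hv1, show ∀ h, v ⟨0,h⟩ = 1 from fun _ => hv0,
      show ∀ h, v ⟨1,h⟩ = t from fun _ => hv1,
      show ∀ h, v ⟨2,h⟩ = 1 from fun _ => hv2, show ∀ h, v ⟨3,h⟩ = t from fun _ => hv3,
      show ∀ h, v ⟨4,h⟩ = 1 from fun _ => hv4, show ∀ h, v ⟨5,h⟩ = t from fun _ => hv5,
      show ∀ h, v ⟨6,h⟩ = 1 from fun _ => hv6, show ∀ h, v ⟨7,h⟩ = t from fun _ => hv7,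
      show ∀ h, v ⟨8,h⟩ = 1 from fun _ => hv8, show ∀ h, v ⟨9,h⟩ = t from fun _ => hv9,
      show ∀ h, v ⟨10,h⟩ = 1 from fun _ => hv10, show ∀ h, v ⟨11,h⟩ = t from fun _ => hv11,
      show ∀ h, v ⟨12,h⟩ = 1 from fun _ => hv12]
    ring
  refine ⟨key, ?_, ?_⟩
  · refine ⟨2, ![fun x => Real.sqrt ((1 + t) / 2) * (x 0 + x 1 + x 2 + x 3) ^ 2,
      fun x => Real.sqrt ((1 - t) / 2) * (x 0 - x 1 + x 2 - x 3) ^ 2], ?_, ?_⟩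
    · intro k
      fin_cases k
      · exact ⟨Matrix.of fun i j => Real.sqrt ((1 + t) / 2), fun x => by
          simp [Fin.sum_univ_four]; ring⟩
      · refine ⟨Matrix.of fun i j =>
          Real.sqrt ((1 - t) / 2) * (![1,-1,1,-1] : Fin 4 → ℝ) i *
            (![1,-1,1,-1] : Fin 4 → ℝ) j, fun x => ?_⟩
        simp [Fin.sum_univ_four]
        ring
    · intro x
      rw [key x]
      simp only [Fin.sum_univ_two, Matrix.cons_val_zero, Matrix.cons_val_one,
        Matrix.head_cons, mul_pow]
      rw [Real.sq_sqrt ha, Real.sq_sqrt hb]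
      ring
  · rw [key ![1, 0, -1, 0]]
    norm_num [show (![1, 0, -1, 0] : Fin 4 → ℝ) 2 = -1 from rfl,
      show (![1, 0, -1, 0] : Fin 4 → ℝ) 3 = 0 from rfl]
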